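/- Let X be a finite abelian group with character group Y, n ≥ 2, and α_{ij} ∈ Aut(X) with α_{1j} = α_{i1} = Id for all i,j = 1,…,n. Suppose the characteristic functions μ̂_i satisfy Π_{i=1}^n μ̂_i(Σ_{j=1}^n α̃_{ij} u_j) = Π_{i,j} μ̂_i(α̃_{ij} u_j) and F_{μ_i} = {0} for all i. Then the homomorphism π : Y^n → Y^n given by π(u_1,…,u_n) = (Σ_j α̃_{1j}u_j, …, Σ_j α̃_{nj}u_j) is an automorphism of Y^n, provided all μ̂_i are nonnegative. -/

import Mathlib

/-- A probability distribution on a finite set, given by its mass function. -/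
def IsDist {X : Type*} [Fintype X] (μ : X → ℝ) : Prop :=
  (∀ x, 0 ≤ μ x) ∧ ∑ x, μ x = 1

/-- The characteristic function `μ̂(y) = ∑_x (x,y) μ({x})` of a distribution `μ`
on a finite abelian group `X`, where `y` is a character of `X`. -/
noncomputable def charFun {X : Type*} [AddCommGroup X] [Fintype X]
    (μ : X → ℝ) (y : AddChar X ℂ) : ℂ :=
  ∑ x, (μ x : ℂ) * y x

/-- The Haar (uniform) distribution `m_K` on a subgroup `K` of `X`. -/
noncomputable def haarDist {X : Type*} [AddCommGroup X] [Fintype X]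
    (K : AddSubgroup X) : X → ℝ :=
  (K : Set X).indicator fun _ => ((Nat.card K : ℝ))⁻¹

/-- The degenerate distribution `E_{x₀}` concentrated at `x₀`. -/
def diracDist {X : Type*} [DecidableEq X] (x₀ : X) : X → ℝ :=
  fun x => if x = x₀ then 1 else 0

/-- Convolution of two distributions on a finite abelian group. -/
noncomputable def convDist {X : Type*} [AddCommGroup X] [Fintype X]
    (μ ν : X → ℝ) : X → ℝ :=
  fun x => ∑ t, μ t * ν (x - t)

/-- `μ` is an idempotent distribution: a shift of the Haar distribution on a subgroup. -/
noncomputable def IsIdempotent {X : Type*} [AddCommGroup X] [Fintype X] [DecidableEq X]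
    (μ : X → ℝ) : Prop :=
  ∃ (K : AddSubgroup X) (x₀ : X), μ = convDist (haarDist K) (diracDist x₀)

/-- The linear forms `L_j = ∑_i A i j (ξ i)`, `j = 1,…,k`, of independent random
variables `ξ i` with distributions `μ i` are independent: the joint distribution of
`(L_1, …, L_k)` equals the product of the marginal distributions. -/
def FormsIndep {X : Type*} [AddCommGroup X] [Fintype X] [DecidableEq X] {n k : ℕ}
    (μ : Fin n → X → ℝ) (A : Fin n → Fin k → X → X) : Prop :=
  ∀ x : Fin k → X,
    (∑ t : Fin n → X, if (∀ j, ∑ i, A i j (t i) = x j) then ∏ i, μ i (t i) else 0) =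
    ∏ j, ∑ t : Fin n → X, if (∑ i, A i j (t i) = x j) then ∏ i, μ i (t i) else 0

/-- The adjoint `α̃` of an endomorphism `α` of `X`, acting on the character group:
`(α x, y) = (x, α̃ y)`. -/
noncomputable def adjChar {X : Type*} [AddCommGroup X] (α : X →+ X)
    (y : AddChar X ℂ) : AddChar X ℂ :=
  y.compAddMonoidHom α


open ComplexOrder in
private lemma aux_prod_one {ι : Type*} [Fintype ι] [DecidableEq ι] (f : ι → ℝ)
    (h0 : ∀ i, 0 ≤ f i) (h1 : ∀ i, f i ≤ 1) (hp : ∏ i, f i = 1) (i : ι) : f i = 1 := by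
  have hrest0 : 0 ≤ ∏ j ∈ Finset.univ.erase i, f j :=
    Finset.prod_nonneg fun j _ => h0 j
  have hrest : ∏ j ∈ Finset.univ.erase i, f j ≤ 1 :=
    Finset.prod_le_one (fun j _ => h0 j) (fun j _ => h1 j)
  have h := Finset.mul_prod_erase Finset.univ f (Finset.mem_univ i)
  rw [hp] at h
  nlinarith [h1 i, h0 i]

private lemma charFun_norm_le_one {X : Type*} [AddCommGroup X] [Fintype X] {μ : X → ℝ}
    (hμ : IsDist μ) (y : AddChar X ℂ) : ‖charFun μ y‖ ≤ 1 := by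
  calc ‖charFun μ y‖ ≤ ∑ x, ‖(μ x : ℂ) * y x‖ := norm_sum_le _ _
    _ = ∑ x, μ x := by
        refine Finset.sum_congr rfl fun x _ => ?_
        rw [norm_mul, AddChar.norm_apply, mul_one, Complex.norm_real,
          Real.norm_eq_abs, abs_of_nonneg (hμ.1 x)]
    _ = 1 := hμ.2

private lemma charFun_triv {X : Type*} [AddCommGroup X] [Fintype X] {μ : X → ℝ}
    (hμ : IsDist μ) : charFun μ 1 = 1 := by
  simp only [charFun, AddChar.one_apply, mul_one]
  exact_mod_cast hμ.2

open ComplexOrder in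
/-- under the functional equation with `α_{1j} = α_{i1} = Id`,
nonnegative `μ̂_i`, and `F_{μ_i} = {0}` for all `i`, the map
`π(u_1,…,u_n) = (∑_j α̃_{1j} u_j, …, ∑_j α̃_{nj} u_j)` is an automorphism of `Y^n`
(the character group `Y` is multiplicative, so the sums are products, `{0}` is `{1}`,
and being an automorphism of the homomorphism `π` means being bijective). -/
theorem stmt9 {X : Type*} [AddCommGroup X] [Fintype X]
    (n : ℕ) (hn : 2 ≤ n)
    (μ : Fin n → X → ℝ) (hμ : ∀ i, IsDist (μ i))
    (hpos : ∀ i y, 0 ≤ charFun (μ i) y)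
    (α : Fin n → Fin n → (X ≃+ X))
    (hα1 : ∀ j, α ⟨0, by omega⟩ j = AddEquiv.refl X)
    (hα2 : ∀ i, α i ⟨0, by omega⟩ = AddEquiv.refl X)
    (heq : ∀ u : Fin n → AddChar X ℂ,
      ∏ i, charFun (μ i) (∏ j, adjChar (α i j : X →+ X) (u j)) =
      ∏ i, ∏ j, charFun (μ i) (adjChar (α i j : X →+ X) (u j)))
    (hF : ∀ i, {y : AddChar X ℂ | charFun (μ i) y = 1} = {1}) :
    Function.Bijective (fun (u : Fin n → AddChar X ℂ) (i : Fin n) =>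
      ∏ j, adjChar (α i j : X →+ X) (u j)) := by
  classical
  have hadj_mul : ∀ (f : X →+ X) (ψ χ : AddChar X ℂ),
      adjChar f (ψ * χ) = adjChar f ψ * adjChar f χ := by
    intro f ψ χ; ext x; simp [adjChar]
  have hadj_inv : ∀ (f : X →+ X) (ψ : AddChar X ℂ),
      adjChar f ψ⁻¹ = (adjChar f ψ)⁻¹ := by
    intro f ψ; ext x; simp [adjChar]
  have hker : ∀ u : Fin n → AddChar X ℂ,
      (∀ i, ∏ j, adjChar (α i j : X →+ X) (u j) = 1) → ∀ j, u j = 1 := by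
    intro u hu
    have h1 : ∏ i, ∏ j, charFun (μ i) (adjChar (α i j : X →+ X) (u j)) = 1 := by
      rw [← heq u]
      calc ∏ i, charFun (μ i) (∏ j, adjChar (α i j : X →+ X) (u j))
          = ∏ i, charFun (μ i) 1 := Finset.prod_congr rfl fun i _ => by rw [hu i]
        _ = 1 := Finset.prod_eq_one fun i _ => charFun_triv (hμ i)
    have him : ∀ i y, (charFun (μ i) y).im = 0 := fun i y =>
      ((Complex.le_def.mp (hpos i y)).2).symm.trans Complex.zero_im
    have hre : ∀ i y, charFun (μ i) y = ((charFun (μ i) y).re : ℂ) := fun i y =>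
      Complex.ext (by simp) (by simp [him i y])
    set r : Fin n × Fin n → ℝ :=
      fun p => (charFun (μ p.1) (adjChar (α p.1 p.2 : X →+ X) (u p.2))).re with hr
    have hr0 : ∀ p, 0 ≤ r p := fun p => by
      have h := (Complex.le_def.mp (hpos p.1 (adjChar (α p.1 p.2 : X →+ X) (u p.2)))).1
      simpa using h
    have hr1 : ∀ p, r p ≤ 1 := fun p => by
      have h := charFun_norm_le_one (hμ p.1) (adjChar (α p.1 p.2 : X →+ X) (u p.2))
      have habs := Complex.abs_re_le_norm (charFun (μ p.1) (adjChar (α p.1 p.2 : X →+ X) (u p.2)))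
      exact le_trans (le_trans (le_abs_self _) habs) h
    have hprod : ∏ p : Fin n × Fin n, r p = 1 := by
      have hc : ((∏ p : Fin n × Fin n, r p : ℝ) : ℂ) = 1 := by
        push_cast
        calc ∏ p : Fin n × Fin n, ((r p : ℝ) : ℂ)
            = ∏ p : Fin n × Fin n,
                charFun (μ p.1) (adjChar (α p.1 p.2 : X →+ X) (u p.2)) :=
              Finset.prod_congr rfl fun p _ => (hre p.1 _).symm
          _ = ∏ i, ∏ j, charFun (μ i) (adjChar (α i j : X →+ X) (u j)) :=
              Fintype.prod_prod_type _
          _ = 1 := h1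
      exact_mod_cast hc
    have hone : ∀ i j, charFun (μ i) (adjChar (α i j : X →+ X) (u j)) = 1 := by
      intro i j
      have := aux_prod_one r hr0 hr1 hprod (i, j)
      rw [hre i (adjChar (α i j : X →+ X) (u j))]
      simp only [hr] at this
      rw [this, Complex.ofReal_one]
    intro j
    have hmem : adjChar ((α ⟨0, by omega⟩ j : X ≃+ X) : X →+ X) (u j) ∈
        {y : AddChar X ℂ | charFun (μ ⟨0, by omega⟩) y = 1} := hone _ j
    rw [hF] at hmem
    have hj : adjChar ((α ⟨0, by omega⟩ j : X ≃+ X) : X →+ X) (u j) = 1 := hmem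
    rw [hα1 j] at hj
    ext x
    have hx := DFunLike.congr_fun hj x
    simpa [adjChar] using hx
  have hinj : Function.Injective (fun (u : Fin n → AddChar X ℂ) (i : Fin n) =>
      ∏ j, adjChar (α i j : X →+ X) (u j)) := by
    intro u v huv
    have hw : ∀ i, ∏ j, adjChar (α i j : X →+ X) ((fun j => u j * (v j)⁻¹) j) = 1 := by
      intro i
      simp only [hadj_mul, hadj_inv]
      have h := congr_fun huv i
      simp only at h
      rw [Finset.prod_mul_distrib, Finset.prod_inv_distrib, h, mul_inv_cancel]
    have hk := hker _ hw
    funext j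
    have hj := hk j
    exact mul_inv_eq_one.mp hj
  exact Finite.injective_iff_bijective.mp hinj
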